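/- Let w be an infinite binary word with only finitely many indices i such that w_i = 1. Then the limit lim_{n→∞} (d_n(w)/n!)^{1/n} exists and equals 0. -/

import Mathlib

open Filter

/-- `dCount w n` is the number of permutations `π` of `{1,…,n}` (modeled as `Fin n`,
zero-based) such that for every `1 ≤ i ≤ n-1`, `π(i) > π(i+1)` iff the `i`-th letter of the
infinite binary word `w` (1-indexed, `w 0` is irrelevant) equals `1` (i.e. `true`). -/
noncomputable def dCount (w : ℕ → Bool) (n : ℕ) : ℕ :=
  Nat.card {π : Equiv.Perm (Fin n) //
    ∀ i : ℕ, ∀ h : i + 1 < n,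
      (π ⟨i + 1, h⟩ < π ⟨i, Nat.lt_of_succ_lt h⟩ ↔ w (i + 1) = true)}

lemma dCount_le (w : ℕ → Bool) (N n : ℕ) (hw : ∀ i, w i = true → i ≤ N) (hn : N ≤ n) :
    dCount w n ≤ n ^ N := by
  classical
  rw [dCount]
  have hcard : Nat.card (Fin N → Fin n) = n ^ N := by
    simp [Nat.card_eq_fintype_card]
  rw [← hcard]
  apply Nat.card_le_card_of_injective
    (f := fun π : {π : Equiv.Perm (Fin n) //
        ∀ i : ℕ, ∀ h : i + 1 < n,
          (π ⟨i + 1, h⟩ < π ⟨i, Nat.lt_of_succ_lt h⟩ ↔ w (i + 1) = true)} =>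
      fun j : Fin N => π.1 ⟨j, lt_of_lt_of_le j.2 hn⟩)
  intro π σ hπσ
  -- both π and σ ascend at positions ≥ N
  have hasc : ∀ (τ : {π : Equiv.Perm (Fin n) //
        ∀ i : ℕ, ∀ h : i + 1 < n,
          (π ⟨i + 1, h⟩ < π ⟨i, Nat.lt_of_succ_lt h⟩ ↔ w (i + 1) = true)}),
      ∀ i : ℕ, ∀ h : i + 1 < n, N ≤ i →
        τ.1 ⟨i, Nat.lt_of_succ_lt h⟩ < τ.1 ⟨i + 1, h⟩ := by
    intro τ i h hNi
    have hwf : w (i + 1) = false := by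
      by_contra hc
      have := hw (i + 1) (by simpa using hc)
      omega
    have h1 := (τ.2 i h)
    rw [hwf] at h1
    have h2 : ¬ τ.1 ⟨i + 1, h⟩ < τ.1 ⟨i, Nat.lt_of_succ_lt h⟩ := by
      intro hc; exact absurd (h1.1 hc) (by simp)
    have hne : τ.1 ⟨i, Nat.lt_of_succ_lt h⟩ ≠ τ.1 ⟨i + 1, h⟩ := by
      intro hc
      have := τ.1.injective hc
      simp [Fin.ext_iff] at this
    exact lt_of_le_of_ne (not_lt.1 h2) hne
  -- agreement on small indices
  have hsmall : ∀ j : Fin n, (j : ℕ) < N → π.1 j = σ.1 j := by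
    intro j hj
    have := congrFun hπσ ⟨j, hj⟩
    simpa using this
  -- strictly monotone tails
  set k := n - N with hk
  have haddlt : ∀ i : Fin k, N + (i : ℕ) < n := fun i => by omega
  set f : Fin k → Fin n := fun i => π.1 ⟨N + i, haddlt i⟩ with hf
  set g : Fin k → Fin n := fun i => σ.1 ⟨N + i, haddlt i⟩ with hg
  have hmono : ∀ (τ : {π : Equiv.Perm (Fin n) //
        ∀ i : ℕ, ∀ h : i + 1 < n,
          (π ⟨i + 1, h⟩ < π ⟨i, Nat.lt_of_succ_lt h⟩ ↔ w (i + 1) = true)}),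
      StrictMono (fun i : Fin k => τ.1 ⟨N + i, haddlt i⟩) := by
    intro τ
    have key : ∀ b : ℕ, ∀ hb : N + b < n, ∀ a : ℕ, ∀ ha : N + a < n, a < b →
        τ.1 ⟨N + a, ha⟩ < τ.1 ⟨N + b, hb⟩ := by
      intro b
      induction b with
      | zero => intro _ a _ ha; omega
      | succ m ih =>
        intro hb a ha hab
        have hstep : τ.1 ⟨N + m, by omega⟩ < τ.1 ⟨N + (m + 1), hb⟩ := by
          have h2 := hasc τ (N + m) (by omega) (by omega)
          have : (⟨N + m + 1, by omega⟩ : Fin n) = ⟨N + (m + 1), hb⟩ := by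
            apply Fin.ext; simp; omega
          rwa [this] at h2
        rcases Nat.lt_or_ge a m with h' | h'
        · exact lt_trans (ih (by omega) a ha h') hstep
        · have : a = m := by omega
          subst this
          have : (⟨N + a, by omega⟩ : Fin n) = ⟨N + a, ha⟩ := rfl
          exact hstep
    intro i j hij
    exact key j (haddlt j) i (haddlt i) hij
  have hrange : Set.range f = Set.range g := by
    have hsymm : ∀ x : Fin n, ((π.1.symm x : Fin n) : ℕ) < N ↔ ((σ.1.symm x : Fin n) : ℕ) < N := by
      intro x
      constructor
      · intro h
        have hx : σ.1 (π.1.symm x) = x := by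
          rw [← hsmall _ h]; exact π.1.apply_symm_apply x
        have : σ.1.symm x = π.1.symm x := (Equiv.symm_apply_eq _).2 hx.symm
        rw [this]; exact h
      · intro h
        have hx : π.1 (σ.1.symm x) = x := by
          rw [hsmall _ h]; exact σ.1.apply_symm_apply x
        have : π.1.symm x = σ.1.symm x := (Equiv.symm_apply_eq _).2 hx.symm
        rw [this]; exact h
    have hmem : ∀ (τ : Equiv.Perm (Fin n)) (x : Fin n),
        (∃ i : Fin k, τ ⟨N + i, haddlt i⟩ = x) ↔ N ≤ ((τ.symm x : Fin n) : ℕ) := by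
      intro τ x
      constructor
      · rintro ⟨i, rfl⟩
        rw [Equiv.symm_apply_apply]
        simp
      · intro h
        have hj : ((τ.symm x : Fin n) : ℕ) < n := (τ.symm x).2
        refine ⟨⟨(τ.symm x : ℕ) - N, by omega⟩, ?_⟩
        have : (⟨N + ((τ.symm x : ℕ) - N), haddlt ⟨(τ.symm x : ℕ) - N, by omega⟩⟩ : Fin n) = τ.symm x := by
          apply Fin.ext; simp; omega
        rw [this, Equiv.apply_symm_apply]
    ext x
    simp only [Set.mem_range, hf, hg]
    rw [hmem π.1 x, hmem σ.1 x]
    constructor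
    · intro h; by_contra hc; exact absurd ((hsymm x).2 (by omega)) (by omega)
    · intro h; by_contra hc; exact absurd ((hsymm x).1 (by omega)) (by omega)
  have hfg : f = g := ((hmono π).range_inj (hmono σ)).1 hrange
  apply Subtype.ext
  apply Equiv.ext
  intro j
  rcases Nat.lt_or_ge (j : ℕ) N with hj | hj
  · exact hsmall j hj
  · have hj2 : (j : ℕ) - N < k := by omega
    have h1 : (⟨N + ((j : ℕ) - N), haddlt ⟨_, hj2⟩⟩ : Fin n) = j := by
      apply Fin.ext; simp; omega
    have := congrFun hfg ⟨(j : ℕ) - N, hj2⟩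
    simp only [hf, hg] at this
    rw [h1] at this
    exact this


theorem stmt16 (w : ℕ → Bool) (hfin : {i : ℕ | w i = true}.Finite) :
    Tendsto (fun n : ℕ => ((dCount w n : ℝ) / (Nat.factorial n : ℝ)) ^ (1 / (n : ℝ)))
      atTop (nhds 0) := by
  obtain ⟨N, hN⟩ : ∃ N : ℕ, ∀ i, w i = true → i ≤ N := by
    obtain ⟨N, hN⟩ := hfin.bddAbove
    exact ⟨N, fun i hi => hN hi⟩
  rw [Metric.tendsto_atTop]
  intro ε hε
  set δ : ℝ := ε / 2 with hδdef
  have hδ : 0 < δ := by positivity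
  -- n^N ≤ 2^n eventually
  have h1 : Tendsto (fun n : ℕ => (n : ℝ) ^ N * (1/2 : ℝ) ^ n) atTop (nhds 0) :=
    (summable_pow_mul_geometric_of_norm_lt_one N (r := (1/2 : ℝ))
      (by rw [Real.norm_eq_abs, abs_of_pos (by norm_num : (0:ℝ) < 1/2)]; norm_num)).tendsto_atTop_zero
  have h1' : ∀ᶠ n : ℕ in atTop, (n : ℝ) ^ N ≤ 2 ^ n := by
    filter_upwards [h1.eventually (ge_mem_nhds (show (0:ℝ) < 1 by norm_num))] with n hn
    have h2pos : (0:ℝ) < 2 ^ n := by positivity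
    have h3 : (n:ℝ)^N * (1/2)^n * 2^n ≤ 1 * 2^n :=
      mul_le_mul_of_nonneg_right hn h2pos.le
    have h4 : ((1:ℝ)/2)^n * 2^n = 1 := by
      rw [← mul_pow]; norm_num
    calc (n:ℝ)^N = (n:ℝ)^N * ((1/2)^n * 2^n) := by rw [h4, mul_one]
      _ ≤ 1 * 2^n := by rw [← mul_assoc]; exact h3
      _ = 2^n := one_mul _
  -- 2^n ≤ δ^n * n! eventually
  have h2 : Tendsto (fun n : ℕ => (2/δ : ℝ) ^ n / (Nat.factorial n : ℝ)) atTop (nhds 0) :=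
    (Real.summable_pow_div_factorial (2/δ)).tendsto_atTop_zero
  have h2' : ∀ᶠ n : ℕ in atTop, (2:ℝ) ^ n ≤ δ ^ n * (Nat.factorial n : ℝ) := by
    filter_upwards [h2.eventually (ge_mem_nhds (show (0:ℝ) < 1 by norm_num))] with n hn
    have hfac : (0:ℝ) < (Nat.factorial n : ℝ) := by positivity
    rw [div_le_one hfac, div_pow] at hn
    have hδn : (0:ℝ) < δ ^ n := by positivity
    rw [div_le_iff₀ hδn] at hn
    linarith [hn]
  have hbound : ∀ᶠ n : ℕ in atTop, (dCount w n : ℝ) / (Nat.factorial n : ℝ) ≤ δ ^ n := by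
    filter_upwards [h1', h2', eventually_ge_atTop N] with n hn1 hn2 hnN
    have hfac : (0:ℝ) < (Nat.factorial n : ℝ) := by positivity
    rw [div_le_iff₀ hfac]
    calc (dCount w n : ℝ) ≤ (n:ℝ) ^ N := by
          have := dCount_le w N n hN hnN
          calc (dCount w n : ℝ) ≤ ((n ^ N : ℕ) : ℝ) := by exact_mod_cast this
            _ = (n:ℝ)^N := by push_cast; ring
      _ ≤ 2 ^ n := hn1
      _ ≤ δ ^ n * (Nat.factorial n : ℝ) := hn2
  rw [eventually_atTop] at hbound
  obtain ⟨M, hM⟩ := hbound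
  refine ⟨max M 1, fun n hn => ?_⟩
  have hn1 : 1 ≤ n := le_trans (le_max_right M 1) hn
  have hnM : M ≤ n := le_trans (le_max_left M 1) hn
  have ha : (0:ℝ) ≤ (dCount w n : ℝ) / (Nat.factorial n : ℝ) := by positivity
  have hr : ((dCount w n : ℝ) / (Nat.factorial n : ℝ)) ^ (1/(n:ℝ)) ≤ δ := by
    have := Real.rpow_le_rpow ha (hM n hnM) (by positivity : (0:ℝ) ≤ 1/(n:ℝ))
    calc ((dCount w n : ℝ) / (Nat.factorial n : ℝ)) ^ (1/(n:ℝ)) ≤ (δ ^ n) ^ (1/(n:ℝ)) := this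
      _ = δ := by
        rw [← Real.rpow_natCast δ n, ← Real.rpow_mul hδ.le]
        rw [mul_one_div, div_self (by positivity : (n:ℝ) ≠ 0), Real.rpow_one]
  rw [Real.dist_eq, sub_zero, abs_of_nonneg (Real.rpow_nonneg ha _)]
  calc _ ≤ δ := hr
    _ < ε := by rw [hδdef]; linarith
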